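/- Let 𝓡 be a reaction network on d ≥ 2 species containing the reactions y*_1 → y*_2, …, y*_{M−1} → y*_M, y*_M → y*_1, and let C be the set of all complexes (sources and products) of 𝓡. Assume: (1) C is totally ordered by the componentwise strict order <, i.e., for any distinct y, y' ∈ C either y < y' or y' < y; (2) for each m ∈ {1,…,M}, the only reaction of 𝓡 whose source complex is y*_m is y*_m → y*_{m+1} (with y*_{M+1} = y*_1); (3) y*_{m_0} = 0 (the zero vector) for some m_0 ∈ {1,…,M}; (4) the set U := {i : e_i ∈ span_ℝ{y' − y : y → y' ∈ 𝓡}} is nonempty, where e_i is the i-th standard basis vector. Then for any i_1 ∈ U, the sequence {x_n}_{n≥1} defined by (x_n)_{i_1} = n + (y*_1)_{i_1} and (x_n)_i = (y*_1)_i for i ≠ i_1 is a tier sequence of 𝓡, and R = (y*_1 → y*_2, …, y*_M → y*_1) is a strong tier-1 cycle along {x_n}. -/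

import Mathlib

open Filter Finset

/-- A reaction network on `d` species: every reaction has a nonnegative source complex and
a nonnegative product complex, and the source differs from the product. -/
def IsRN (d : ℕ) (Rn : Finset ((Fin d → ℤ) × (Fin d → ℤ))) : Prop :=
  ∀ r ∈ Rn, (∀ i, 0 ≤ r.1 i) ∧ (∀ i, 0 ≤ r.2 i) ∧ r.1 ≠ r.2

/-- Mass-action intensity `λ_y(x) = ∏ i, x_i!/(x_i - y_i)!` if `x ≥ y` componentwise, else `0`. -/
def intensity (d : ℕ) (y x : Fin d → ℤ) : ℕ :=
  if ∀ i, y i ≤ x i then ∏ i : Fin d, Nat.descFactorial (x i).toNat ((y i).toNat) else 0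

/-- Cyclic successor on `{1, …, M}`: `cyc M m = m + 1` for `m < M` and `cyc M M = 1`. -/
def cyc (M m : ℕ) : ℕ := if m = M then 1 else m + 1

/-- `xshift d ystar x m n = x^m_n = x_n + ∑_{j=1}^{m-1} (y*_{j+1} - y*_j)`. -/
def xshift (d : ℕ) (ystar : ℕ → Fin d → ℤ) (x : ℕ → Fin d → ℤ) (m n : ℕ) : Fin d → ℤ :=
  fun i => x n i + ∑ j ∈ Finset.Ico 1 m, (ystar (j + 1) i - ystar j i)

/-- The ordered list `(y*_1 → y*_2, …, y*_M → y*_1)` consists of reactions of the network. -/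
def IsCycleIn (d : ℕ) (Rn : Finset ((Fin d → ℤ) × (Fin d → ℤ))) (M : ℕ)
    (ystar : ℕ → Fin d → ℤ) : Prop :=
  ∀ m, 1 ≤ m → m ≤ M → (ystar m, ystar (cyc M m)) ∈ Rn

/-- Condition (ii) of a strong tier-1 cycle, with explicit witness `m0`. -/
def TierLimits (d : ℕ) (Rn : Finset ((Fin d → ℤ) × (Fin d → ℤ))) (M : ℕ)
    (ystar : ℕ → Fin d → ℤ) (x : ℕ → Fin d → ℤ) (m0 : ℕ) : Prop :=
  ∀ m, 1 ≤ m → m ≤ M → ∀ y y' : Fin d → ℤ, (y, y') ∈ Rn →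
    (y, y') ≠ (ystar m, ystar (cyc M m)) →
    Tendsto (fun n =>
        ((intensity d (ystar m0) (xshift d ystar x m0 n) : ℝ) *
          (intensity d y (xshift d ystar x m n) : ℝ)) /
          (intensity d (ystar m) (xshift d ystar x m n) : ℝ))
      atTop (nhds 0)

/-- `R = (y*_1 → y*_2, …, y*_M → y*_1)` is a strong tier-1 cycle along `x`. -/
def IsStrongT1Cycle (d : ℕ) (Rn : Finset ((Fin d → ℤ) × (Fin d → ℤ))) (M : ℕ)
    (ystar : ℕ → Fin d → ℤ) (x : ℕ → Fin d → ℤ) : Prop :=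
  IsCycleIn d Rn M ystar ∧
  (∀ n, 0 < intensity d (ystar 1) (x n)) ∧
  ∃ m0, 1 ≤ m0 ∧ m0 ≤ M ∧ TierLimits d Rn M ystar x m0

/-- `y` is a source complex of the network. -/
def IsSourceIn (d : ℕ) (Rn : Finset ((Fin d → ℤ) × (Fin d → ℤ))) (y : Fin d → ℤ) : Prop :=
  ∃ y', (y, y') ∈ Rn

/-- `y` is a complex (source or product) of the network. -/
def ComplexOf (d : ℕ) (Rn : Finset ((Fin d → ℤ) × (Fin d → ℤ))) (y : Fin d → ℤ) : Prop :=
  ∃ r ∈ Rn, r.1 = y ∨ r.2 = y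

/-- Tier sequence of a reaction network. -/
def IsTierSeq (d : ℕ) (Rn : Finset ((Fin d → ℤ) × (Fin d → ℤ)))
    (x : ℕ → Fin d → ℤ) : Prop :=
  (∀ n i, 0 ≤ x n i) ∧
  (∃ i, Tendsto (fun n => x n i) atTop atTop) ∧
  (∀ i, (Tendsto (fun n => x n i) atTop atTop ∧ Monotone fun n => x n i) ∨
      (∃ c : ℤ, ∀ n, x n i = c)) ∧
  (∀ y y' : Fin d → ℤ, IsSourceIn d Rn y → IsSourceIn d Rn y' →
    (Tendsto (fun n => (intensity d y (x n) : ℝ) / (intensity d y' (x n) : ℝ)) atTop atTop ∨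
      ∃ c : ℝ, Tendsto (fun n => (intensity d y (x n) : ℝ) / (intensity d y' (x n) : ℝ))
        atTop (nhds c)))

/-- One reaction step: some reaction `y → y'` with `y ≤ a` fires, giving `b = a + y' - y`. -/
def ReactStep (d : ℕ) (Rn : Finset ((Fin d → ℤ) × (Fin d → ℤ)))
    (a b : Fin d → ℤ) : Prop :=
  ∃ r ∈ Rn, (∀ i, r.1 i ≤ a i) ∧ b = fun i => a i + (r.2 i - r.1 i)

/-- `w` is reachable from `z` by finitely many reaction steps. -/
def Reachable (d : ℕ) (Rn : Finset ((Fin d → ℤ) × (Fin d → ℤ)))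
    (z w : Fin d → ℤ) : Prop :=
  Relation.ReflTransGen (ReactStep d Rn) z w

/-- Weak reversibility: every reaction lies on a directed cycle of reactions. -/
def WeaklyReversible (d : ℕ) (Rn : Finset ((Fin d → ℤ) × (Fin d → ℤ))) : Prop :=
  ∀ r ∈ Rn, ∃ (K : ℕ) (ys : ℕ → Fin d → ℤ), 2 ≤ K ∧
    ys 1 = r.1 ∧ ys 2 = r.2 ∧
    (∀ j, 1 ≤ j → j < K → (ys j, ys (j + 1)) ∈ Rn) ∧
    (ys K, ys 1) ∈ Rn



lemma descPos {n k : ℕ} (h : k ≤ n) : 0 < n.descFactorial k :=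
  Nat.pos_of_ne_zero (fun h0 => absurd (Nat.descFactorial_eq_zero_iff_lt.mp h0) (not_lt.mpr h))

lemma aux_desc_mul (m a b : ℕ) (h : a ≤ b) :
    m.descFactorial b = (∏ j ∈ Finset.Ico a b, (m - j)) * m.descFactorial a := by
  induction b, h using Nat.le_induction with
  | base => simp
  | succ b hb ih =>
      rw [Nat.descFactorial_succ, ih, Finset.prod_Ico_succ_top hb]; ring

lemma descRatio_atTop (K a b : ℕ) (h : b < a) :
    Tendsto (fun n : ℕ => (((n + K).descFactorial a : ℕ) : ℝ) / (((n + K).descFactorial b : ℕ) : ℝ))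
      atTop atTop := by
  have h1 : Tendsto (fun n : ℕ => ((∏ j ∈ Finset.Ico b a, (n + K - j) : ℕ) : ℝ)) atTop atTop := by
    apply tendsto_natCast_atTop_atTop.comp
    refine tendsto_atTop_atTop.mpr (fun C => ⟨C + a, fun n hn => ?_⟩)
    calc C ≤ n + K - b := by omega
      _ ≤ ∏ j ∈ Finset.Ico b a, (n + K - j) :=
        Finset.single_le_prod' (fun j hj => by simp only [Finset.mem_Ico] at hj; omega)
          (Finset.mem_Ico.mpr ⟨le_rfl, h⟩)
  apply h1.congr'
  filter_upwards [eventually_ge_atTop a] with n hn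
  have hb : 0 < (n + K).descFactorial b := descPos (by omega)
  rw [aux_desc_mul (n + K) b a h.le]
  push_cast
  rw [mul_div_assoc, div_self (by exact_mod_cast hb.ne'), mul_one]

lemma descRatio_zero (K a b : ℕ) (h : a < b) :
    Tendsto (fun n : ℕ => (((n + K).descFactorial a : ℕ) : ℝ) / (((n + K).descFactorial b : ℕ) : ℝ))
      atTop (nhds 0) := by
  apply ((descRatio_atTop K b a h).inv_tendsto_atTop).congr'
  filter_upwards [eventually_ge_atTop b] with n hn
  simp only [Pi.inv_apply]
  rw [inv_div]

lemma descRatio_one (K a : ℕ) :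
    Tendsto (fun n : ℕ => (((n + K).descFactorial a : ℕ) : ℝ) / (((n + K).descFactorial a : ℕ) : ℝ))
      atTop (nhds 1) := by
  apply tendsto_const_nhds.congr'
  filter_upwards [eventually_ge_atTop a] with n hn
  rw [div_self]
  exact_mod_cast (descPos (show a ≤ n + K by omega)).ne'


lemma telescope (f : ℕ → ℤ) (m : ℕ) (hm : 1 ≤ m) :
    ∑ j ∈ Finset.Ico 1 m, (f (j + 1) - f j) = f m - f 1 := by
  induction m, hm using Nat.le_induction with
  | base => simp
  | succ m hm ih => rw [Finset.sum_Ico_succ_top hm, ih]; ring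

lemma intensity_shift {d : ℕ} (i1 : Fin d) (z y : Fin d → ℤ)
    (hz : ∀ i, 0 ≤ z i) (hy0 : ∀ i, 0 ≤ y i) (hle : ∀ i, y i ≤ z i) (n : ℕ) :
    intensity d y (fun i => if i = i1 then ((n : ℤ) + 1) + z i else z i) =
      (∏ i ∈ Finset.univ.erase i1, ((z i).toNat.descFactorial (y i).toNat)) *
        (n + (1 + (z i1).toNat)).descFactorial (y i1).toNat := by
  rw [intensity, if_pos]
  · rw [← Finset.prod_erase_mul _ _ (Finset.mem_univ i1)]
    congr 1
    · exact Finset.prod_congr rfl fun i hi => by rw [if_neg (Finset.ne_of_mem_erase hi)]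
    · rw [if_pos rfl]
      congr 1
      have := hz i1
      omega
  · intro i
    by_cases hi : i = i1
    · rw [if_pos hi]
      subst hi
      have h1 := hle i
      have h2 := hz i
      omega
    · rw [if_neg hi]; exact hle i

lemma Ppos {d : ℕ} (i1 : Fin d) (z y : Fin d → ℤ)
    (hy0 : ∀ i, 0 ≤ y i) (hle : ∀ i, y i ≤ z i) :
    0 < ∏ i ∈ Finset.univ.erase i1, ((z i).toNat.descFactorial (y i).toNat) :=
  Finset.prod_pos fun i _ => descPos (by have := hy0 i; have := hle i; omega)

lemma intensity_eq_zero {d : ℕ} {y x : Fin d → ℤ} (i : Fin d) (h : x i < y i) :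
    intensity d y x = 0 := by
  rw [intensity, if_neg]
  push_neg
  exact ⟨i, h⟩

lemma shift_ratio_zero {d : ℕ} (i1 : Fin d) (z y y' : Fin d → ℤ)
    (hz : ∀ i, 0 ≤ z i) (hy0 : ∀ i, 0 ≤ y i) (hy'0 : ∀ i, 0 ≤ y' i)
    (hle : ∀ i, y i ≤ z i) (hle' : ∀ i, y' i ≤ z i) (hlt : y i1 < y' i1) :
    Tendsto (fun n : ℕ =>
        (intensity d y (fun i => if i = i1 then ((n : ℤ) + 1) + z i else z i) : ℝ) /
        (intensity d y' (fun i => if i = i1 then ((n : ℤ) + 1) + z i else z i) : ℝ))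
      atTop (nhds 0) := by
  simp only [fun n => intensity_shift i1 z y hz hy0 hle n,
    fun n => intensity_shift i1 z y' hz hy'0 hle' n]
  have hab : (y i1).toNat < (y' i1).toNat := by have := hy0 i1; omega
  have h := (descRatio_zero (1 + (z i1).toNat) (y i1).toNat (y' i1).toNat hab).const_mul
    ((∏ i ∈ Finset.univ.erase i1, ((z i).toNat.descFactorial (y i).toNat) : ℕ) /
      (∏ i ∈ Finset.univ.erase i1, ((z i).toNat.descFactorial (y' i).toNat) : ℕ) : ℝ)
  rw [mul_zero] at h
  refine h.congr fun n => ?_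
  push_cast
  rw [mul_div_mul_comm]

lemma shift_ratio_cases {d : ℕ} (i1 : Fin d) (z y y' : Fin d → ℤ)
    (hz : ∀ i, 0 ≤ z i) (hy0 : ∀ i, 0 ≤ y i) (hy'0 : ∀ i, 0 ≤ y' i)
    (hle : ∀ i, y i ≤ z i) (hle' : ∀ i, y' i ≤ z i) :
    Tendsto (fun n : ℕ =>
        (intensity d y (fun i => if i = i1 then ((n : ℤ) + 1) + z i else z i) : ℝ) /
        (intensity d y' (fun i => if i = i1 then ((n : ℤ) + 1) + z i else z i) : ℝ))
      atTop atTop ∨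
    ∃ c : ℝ, Tendsto (fun n : ℕ =>
        (intensity d y (fun i => if i = i1 then ((n : ℤ) + 1) + z i else z i) : ℝ) /
        (intensity d y' (fun i => if i = i1 then ((n : ℤ) + 1) + z i else z i) : ℝ))
      atTop (nhds c) := by
  set P := (∏ i ∈ Finset.univ.erase i1, ((z i).toNat.descFactorial (y i).toNat)) with hP
  set P' := (∏ i ∈ Finset.univ.erase i1, ((z i).toNat.descFactorial (y' i).toNat)) with hP'
  rcases lt_trichotomy (y i1) (y' i1) with h | h | h
  · exact Or.inr ⟨0, shift_ratio_zero i1 z y y' hz hy0 hy'0 hle hle' h⟩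
  · refine Or.inr ⟨(P : ℝ) / (P' : ℝ), ?_⟩
    simp only [fun n => intensity_shift i1 z y hz hy0 hle n,
      fun n => intensity_shift i1 z y' hz hy'0 hle' n]
    have heq : (y i1).toNat = (y' i1).toNat := by rw [h]
    have h2 := (descRatio_one (1 + (z i1).toNat) (y i1).toNat).const_mul ((P : ℝ) / (P' : ℝ))
    rw [mul_one] at h2
    refine h2.congr fun n => ?_
    rw [heq, hP, hP']
    push_cast
    rw [mul_div_mul_comm]
  · refine Or.inl ?_
    simp only [fun n => intensity_shift i1 z y hz hy0 hle n,
      fun n => intensity_shift i1 z y' hz hy'0 hle' n]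
    have hab : (y' i1).toNat < (y i1).toNat := by have := hy'0 i1; omega
    have hpos : (0 : ℝ) < (P : ℝ) / (P' : ℝ) := by
      apply div_pos <;> exact_mod_cast (by first
        | exact Ppos i1 z y hy0 hle
        | exact Ppos i1 z y' hy'0 hle')
    have h2 := (descRatio_atTop (1 + (z i1).toNat) (y i1).toNat (y' i1).toNat hab).const_mul_atTop hpos
    refine h2.congr fun n => ?_
    rw [hP, hP']
    push_cast
    rw [mul_div_mul_comm]

/-- Corollary 1 (structural part): under total ordering of the complexes, uniqueness of the
outgoing reactions along the cycle, `y*_{m0} = 0`, and `e_{i_1}` in the span of the reaction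
vectors, the explicit sequence is a tier sequence along which `R` is a strong tier-1 cycle. -/
theorem stmt6 {d M : ℕ} (hd : 2 ≤ d) (hM : 1 ≤ M)
    (Rn : Finset ((Fin d → ℤ) × (Fin d → ℤ))) (hRn : IsRN d Rn)
    (ystar : ℕ → Fin d → ℤ) (hmem : IsCycleIn d Rn M ystar)
    (htot : ∀ y y' : Fin d → ℤ, ComplexOf d Rn y → ComplexOf d Rn y' → y ≠ y' →
      (∀ i, y i < y' i) ∨ (∀ i, y' i < y i))
    (honly : ∀ m, 1 ≤ m → m ≤ M → ∀ y' : Fin d → ℤ, (ystar m, y') ∈ Rn →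
      y' = ystar (cyc M m))
    (hzero : ∃ m0, 1 ≤ m0 ∧ m0 ≤ M ∧ ystar m0 = 0)
    (i1 : Fin d)
    (hi1 : (Pi.single i1 1 : Fin d → ℝ) ∈
      Submodule.span ℝ {v : Fin d → ℝ | ∃ r ∈ Rn, v = fun i => ((r.2 i - r.1 i : ℤ) : ℝ)}) :
    IsTierSeq d Rn
      (fun n i => if i = i1 then ((n : ℤ) + 1) + ystar 1 i else ystar 1 i) ∧
    IsStrongT1Cycle d Rn M ystar
      (fun n i => if i = i1 then ((n : ℤ) + 1) + ystar 1 i else ystar 1 i) := by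
  obtain ⟨m0, hm01, hm0M, hm0z⟩ := hzero
  set xs : ℕ → Fin d → ℤ := fun n i => if i = i1 then ((n : ℤ) + 1) + ystar 1 i else ystar 1 i
    with hxs
  have hyst : ∀ m, 1 ≤ m → m ≤ M → ∀ i, 0 ≤ ystar m i :=
    fun m h1 h2 i => (hRn _ (hmem m h1 h2)).1 i
  have hy1 := hyst 1 le_rfl hM
  have hcomplex : ∀ m, 1 ≤ m → m ≤ M → ComplexOf d Rn (ystar m) :=
    fun m h1 h2 => ⟨_, hmem m h1 h2, Or.inl rfl⟩
  have hsrc_complex : ∀ y : Fin d → ℤ, IsSourceIn d Rn y → ComplexOf d Rn y :=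
    fun y hy => by obtain ⟨y', h⟩ := hy; exact ⟨_, h, Or.inl rfl⟩
  have hsrc_nonneg : ∀ y : Fin d → ℤ, IsSourceIn d Rn y → ∀ i, 0 ≤ y i :=
    fun y hy => by obtain ⟨y', h⟩ := hy; exact (hRn _ h).1
  obtain ⟨i2, hi2⟩ : ∃ i2 : Fin d, i2 ≠ i1 := by
    have hcard : 1 < Fintype.card (Fin d) := by rw [Fintype.card_fin]; omega
    exact Fintype.exists_ne_of_one_lt_card hcard i1
  have htri : ∀ z y : Fin d → ℤ, ComplexOf d Rn z → ComplexOf d Rn y →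
      (∀ i, y i ≤ z i) ∨ (∀ i, z i < y i) := by
    intro z y hz hy
    by_cases h : y = z
    · exact Or.inl fun i => le_of_eq (congrFun h i)
    · rcases htot y z hy hz h with h1 | h1
      · exact Or.inl fun i => (h1 i).le
      · exact Or.inr h1
  have hxshift : ∀ m, 1 ≤ m → ∀ n, xshift d ystar xs m n =
      fun i => if i = i1 then ((n : ℤ) + 1) + ystar m i else ystar m i := by
    intro m hm n
    funext i
    show xs n i + ∑ j ∈ Finset.Ico 1 m, (ystar (j + 1) i - ystar j i) = _
    rw [telescope (fun j => ystar j i) m hm]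
    by_cases hi : i = i1
    · rw [hxs]; simp only [if_pos hi]; ring
    · rw [hxs]; simp only [if_neg hi]; ring
  constructor
  · refine ⟨?_, ?_, ?_, ?_⟩
    · intro n i
      by_cases hi : i = i1
      · simp only [hxs, if_pos hi]
        have := hy1 i
        omega
      · simp only [hxs, if_neg hi]
        exact hy1 i
    · refine ⟨i1, ?_⟩
      simp only [hxs, if_pos rfl]
      exact tendsto_atTop_add_const_right _ _
        (tendsto_atTop_add_const_right _ 1 tendsto_natCast_atTop_atTop)
    · intro i
      by_cases hi : i = i1
      · left
        simp only [hxs, if_pos hi]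
        constructor
        · exact tendsto_atTop_add_const_right _ _
            (tendsto_atTop_add_const_right _ 1 tendsto_natCast_atTop_atTop)
        · intro a b hab
          simp only
          have : (a : ℤ) ≤ (b : ℤ) := by exact_mod_cast hab
          omega
      · right
        exact ⟨ystar 1 i, fun n => if_neg hi⟩
    · intro y y' hy hy'
      rcases htri (ystar 1) y' (hcomplex 1 le_rfl hM) (hsrc_complex y' hy') with h' | h'
      · rcases htri (ystar 1) y (hcomplex 1 le_rfl hM) (hsrc_complex y hy) with h | h
        · exact shift_ratio_cases i1 (ystar 1) y y' hy1 (hsrc_nonneg y hy)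
            (hsrc_nonneg y' hy') h h'
        · refine Or.inr ⟨0, tendsto_const_nhds.congr fun n => ?_⟩
          have hz : intensity d y (xs n) = 0 := by
            apply intensity_eq_zero i2
            simp only [hxs, if_neg hi2]
            exact h i2
          rw [hz, Nat.cast_zero, zero_div]
      · refine Or.inr ⟨0, tendsto_const_nhds.congr fun n => ?_⟩
        have hz : intensity d y' (xs n) = 0 := by
          apply intensity_eq_zero i2
          simp only [hxs, if_neg hi2]
          exact h' i2
        rw [hz, Nat.cast_zero, div_zero]
  · refine ⟨hmem, ?_, m0, hm01, hm0M, ?_⟩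
    · intro n
      rw [intensity, if_pos]
      · apply Finset.prod_pos
        intro i _
        apply descPos
        by_cases hi : i = i1
        · simp only [hxs, if_pos hi]
          have := hy1 i
          omega
        · simp only [hxs, if_neg hi]
          exact le_rfl
      · intro i
        by_cases hi : i = i1
        · simp only [hxs, if_pos hi]
          have := hy1 i
          omega
        · simp only [hxs, if_neg hi]
          exact le_rfl
    · intro m hm1 hmM y y' hr hne
      have hm0I : ∀ n, intensity d (ystar m0) (xshift d ystar xs m0 n) = 1 := by
        intro n
        rw [hxshift m0 hm01, hm0z, intensity, if_pos]
        · simp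
        · intro i
          by_cases hi : i = i1
          · simp only [if_pos hi, Pi.zero_apply]
            omega
          · simp only [if_neg hi, Pi.zero_apply]
            exact le_rfl
      simp only [hm0I, Nat.cast_one, one_mul, hxshift m hm1]
      have hym := hyst m hm1 hmM
      have hyne : y ≠ ystar m := by
        rintro rfl
        exact hne (by rw [honly m hm1 hmM y' hr])
      rcases htri (ystar m) y (hcomplex m hm1 hmM) (hsrc_complex y ⟨y', hr⟩) with h | h
      · have hs : ∀ i, y i < ystar m i := by
          rcases htot y (ystar m) (hsrc_complex y ⟨y', hr⟩) (hcomplex m hm1 hmM) hyne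
            with hs | hs
          · exact hs
          · exact absurd (h i2) (not_le.mpr (hs i2))
        exact shift_ratio_zero i1 (ystar m) y (ystar m) hym (hsrc_nonneg y ⟨y', hr⟩) hym
          (fun i => (hs i).le) (fun i => le_rfl) (hs i1)
      · refine tendsto_const_nhds.congr fun n => ?_
        have hz : intensity d y
            (fun i => if i = i1 then ((n : ℤ) + 1) + ystar m i else ystar m i) = 0 := by
          apply intensity_eq_zero i2
          simp only [if_neg hi2]
          exact h i2
        rw [hz, Nat.cast_zero, zero_div]
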